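/- For all nonzero x, y ∈ F^4: y ∈ π[x] if and only if x ∈ π[y]. (Hence the adjacency relation 'y lies on the polar line of x' is symmetric.) -/

import Mathlib

open Matrix

noncomputable section

abbrev F (n : ℕ) : Type := GaloisField 2 (2 * n + 1)

def om (n : ℕ) : ℕ := 2 ^ (n + 1)

/-- The four spanning vectors of the polar line `π[x]`. -/
def polarGens (n : ℕ) (x : Fin 4 → F n) : Set (Fin 4 → F n) :=
  {![0, (x 0 * x 1 + x 2 * x 3) ^ 2 ^ n, x 0 ^ om n, x 2 ^ om n],
   ![(x 0 * x 1 + x 2 * x 3) ^ 2 ^ n, 0, x 3 ^ om n, x 1 ^ om n],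
   ![x 0 ^ om n, x 3 ^ om n, 0, (x 0 * x 1 + x 2 * x 3) ^ 2 ^ n],
   ![x 2 ^ om n, x 1 ^ om n, (x 0 * x 1 + x 2 * x 3) ^ 2 ^ n, 0]}

/-- The polar line `π[x]`, as a subspace of `F⁴`. -/
def polarSpan (n : ℕ) (x : Fin 4 → F n) : Submodule (F n) (Fin 4 → F n) :=
  Submodule.span (F n) (polarGens n x)
namespace PolarAux

variable {n : ℕ}

lemma two_eq_zero (n : ℕ) : (2 : F n) = 0 := by
  have h := CharP.cast_eq_zero (F n) 2
  simpa using h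

lemma pcard (t : F n) : t ^ 2 ^ (2 * n + 1) = t := by
  haveI : Fintype (F n) := Fintype.ofFinite _
  have hc : Fintype.card (F n) = 2 ^ (2 * n + 1) := by
    rw [← Nat.card_eq_fintype_card]
    exact GaloisField.card 2 (2 * n + 1) (by omega)
  rw [← hc]
  exact FiniteField.pow_card t

lemma sig_sig (t : F n) : (t ^ om n) ^ om n = t ^ 2 := by
  rw [← pow_mul, show om n * om n = 2 ^ (2 * n + 1) * 2 by
    simp only [om, ← pow_add]; rw [← pow_succ]; congr 1; omega, pow_mul, pcard]

lemma sig_h (t : F n) : (t ^ 2 ^ n) ^ om n = t := by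
  rw [← pow_mul, show 2 ^ n * om n = 2 ^ (2 * n + 1) by
    simp only [om, ← pow_add]; congr 1; omega]
  exact pcard t

lemma add_pow_om (s t : F n) : (s + t) ^ om n = s ^ om n + t ^ om n := by
  simp only [om]
  exact add_pow_char_pow ..

end PolarAux
namespace PolarAux

variable {n : ℕ}

/-- The generating vectors as an indexed family (rows of the symmetric matrix `M(x)`). -/
def gv (n : ℕ) (x : Fin 4 → F n) : Fin 4 → (Fin 4 → F n) :=
  ![![0, (x 0 * x 1 + x 2 * x 3) ^ 2 ^ n, x 0 ^ om n, x 2 ^ om n],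
    ![(x 0 * x 1 + x 2 * x 3) ^ 2 ^ n, 0, x 3 ^ om n, x 1 ^ om n],
    ![x 0 ^ om n, x 3 ^ om n, 0, (x 0 * x 1 + x 2 * x 3) ^ 2 ^ n],
    ![x 2 ^ om n, x 1 ^ om n, (x 0 * x 1 + x 2 * x 3) ^ 2 ^ n, 0]]

def Mmat (n : ℕ) (x : Fin 4 → F n) : Matrix (Fin 4) (Fin 4) (F n) := Matrix.of (gv n x)

/-- The matrix `M(x̃)` for `x̃ = (x₁, x₀, x₃, x₂)`, written with entries in terms of `x`. -/
def Nmat (n : ℕ) (x : Fin 4 → F n) : Matrix (Fin 4) (Fin 4) (F n) := Matrix.of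
  ![![0, (x 0 * x 1 + x 2 * x 3) ^ 2 ^ n, x 1 ^ om n, x 3 ^ om n],
    ![(x 0 * x 1 + x 2 * x 3) ^ 2 ^ n, 0, x 2 ^ om n, x 0 ^ om n],
    ![x 1 ^ om n, x 2 ^ om n, 0, (x 0 * x 1 + x 2 * x 3) ^ 2 ^ n],
    ![x 3 ^ om n, x 0 ^ om n, (x 0 * x 1 + x 2 * x 3) ^ 2 ^ n, 0]]

lemma Nmat_eq (x : Fin 4 → F n) : Nmat n x = Mmat n ![x 1, x 0, x 3, x 2] := by
  have hc : (x 1 * x 0 + x 3 * x 2 : F n) = x 0 * x 1 + x 2 * x 3 := by ring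
  ext i j
  fin_cases i <;> fin_cases j <;>
    simp [Nmat, Mmat, gv, hc]

lemma range_gv (x : Fin 4 → F n) : Set.range (gv n x) = polarGens n x := by
  ext v
  constructor
  · rintro ⟨i, rfl⟩
    fin_cases i <;> simp [gv, polarGens]
  · intro hv
    simp only [polarGens, Set.mem_insert_iff, Set.mem_singleton_iff] at hv
    rcases hv with rfl | rfl | rfl | rfl
    exacts [⟨0, rfl⟩, ⟨1, rfl⟩, ⟨2, rfl⟩, ⟨3, rfl⟩]

lemma Mmat_symm (x : Fin 4 → F n) : (Mmat n x)ᵀ = Mmat n x := by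
  ext i j
  fin_cases i <;> fin_cases j <;> rfl

lemma range_Mmat (x : Fin 4 → F n) :
    LinearMap.range (Mmat n x).mulVecLin = polarSpan n x := by
  rw [Matrix.range_mulVecLin, ← Mmat_symm, polarSpan, ← range_gv]
  rfl

lemma range_Nmat (x : Fin 4 → F n) :
    LinearMap.range (Nmat n x).mulVecLin = polarSpan n ![x 1, x 0, x 3, x 2] := by
  rw [Nmat_eq, range_Mmat]

end PolarAux
namespace PolarAux

variable {n : ℕ}

lemma hA_rel (x : Fin 4 → F n) :
    ((x 0 * x 1 + x 2 * x 3 : F n)) ^ 2 ^ n * (x 0 * x 1 + x 2 * x 3) ^ 2 ^ n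
      = x 0 ^ om n * x 1 ^ om n + x 2 ^ om n * x 3 ^ om n := by
  rw [← pow_add, show 2 ^ n + 2 ^ n = om n from by rw [om, pow_succ, mul_two],
    add_pow_om, mul_pow, mul_pow]

lemma span_le_ker (x : Fin 4 → F n) :
    polarSpan n x ≤ LinearMap.ker (Nmat n x).mulVecLin := by
  have h2 := two_eq_zero n
  have hA := hA_rel x
  rw [polarSpan, Submodule.span_le]
  intro v hv
  simp only [polarGens, Set.mem_insert_iff, Set.mem_singleton_iff] at hv
  rcases hv with rfl | rfl | rfl | rfl <;>
  · simp only [SetLike.mem_coe, LinearMap.mem_ker, Matrix.mulVecLin_apply, Nmat,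
      Matrix.cons_mulVec, Matrix.empty_mulVec, Matrix.cons_dotProduct,
      Matrix.dotProduct_of_isEmpty, Matrix.head_cons, Matrix.tail_cons,
      Matrix.cons_eq_zero_iff, Matrix.zero_empty, and_true]
    refine ⟨?_, ?_, ?_, ?_⟩ <;>
    first
      | linear_combination hA + (x 0 ^ om n * x 1 ^ om n + x 2 ^ om n * x 3 ^ om n) * h2
      | linear_combination ((x 0 * x 1 + x 2 * x 3) ^ 2 ^ n * x 0 ^ om n) * h2
      | linear_combination ((x 0 * x 1 + x 2 * x 3) ^ 2 ^ n * x 1 ^ om n) * h2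
      | linear_combination ((x 0 * x 1 + x 2 * x 3) ^ 2 ^ n * x 2 ^ om n) * h2
      | linear_combination ((x 0 * x 1 + x 2 * x 3) ^ 2 ^ n * x 3 ^ om n) * h2
      | linear_combination (x 0 ^ om n * x 2 ^ om n) * h2
      | linear_combination (x 1 ^ om n * x 3 ^ om n) * h2
      | linear_combination (x 0 ^ om n * x 3 ^ om n) * h2
      | linear_combination (x 1 ^ om n * x 2 ^ om n) * h2

end PolarAux
namespace PolarAux

variable {n : ℕ}

lemma om_ne_zero : om n ≠ 0 := by
  rw [om]; exact (pow_pos (by norm_num : (0:ℕ) < 2) (n + 1)).ne'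

lemma vecHead_eq (v : Fin 4 → F n) : Matrix.vecHead v = v 0 := rfl
lemma vt1 (v : Fin 4 → F n) : Matrix.vecHead (Matrix.vecTail v) = v 1 := rfl
lemma vt2 (v : Fin 4 → F n) : Matrix.vecHead (Matrix.vecTail (Matrix.vecTail v)) = v 2 := rfl
lemma vt3 (v : Fin 4 → F n) :
    Matrix.vecHead (Matrix.vecTail (Matrix.vecTail (Matrix.vecTail v))) = v 3 := rfl

lemma ker_swap {x y : Fin 4 → F n} (h : (Nmat n x).mulVec y = 0) :
    (Nmat n y).mulVec x = 0 := by
  have h2 := two_eq_zero n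
  simp only [Nmat, Matrix.cons_mulVec, Matrix.empty_mulVec, Matrix.cons_dotProduct,
    Matrix.dotProduct_of_isEmpty, Matrix.head_cons, Matrix.tail_cons,
    Matrix.cons_eq_zero_iff, Matrix.zero_empty, and_true, vecHead_eq, vt1, vt2, vt3] at h ⊢
  obtain ⟨hG1, hG2, hG3, hG4⟩ := h
  have k1 : (y 0 * y 1 + y 2 * y 3) ^ 2 ^ n * x 1 + y 1 ^ om n * x 2 + y 3 ^ om n * x 3
      = 0 := by
    rw [← pow_eq_zero_iff (om_ne_zero (n := n)), add_pow_om, add_pow_om, mul_pow, mul_pow,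
      mul_pow, sig_h, sig_sig, sig_sig]
    linear_combination y 1 * hG3 + y 3 * hG1
      - (x 0 * x 1 + x 2 * x 3) ^ 2 ^ n * (y 1 * y 3) * h2
  have k2 : (y 0 * y 1 + y 2 * y 3) ^ 2 ^ n * x 0 + y 2 ^ om n * x 2 + y 0 ^ om n * x 3
      = 0 := by
    rw [← pow_eq_zero_iff (om_ne_zero (n := n)), add_pow_om, add_pow_om, mul_pow, mul_pow,
      mul_pow, sig_h, sig_sig, sig_sig]
    linear_combination y 2 * hG2 + y 0 * hG4
      - (x 0 * x 1 + x 2 * x 3) ^ 2 ^ n * (y 0 * y 2) * h2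
  have k3 : y 1 ^ om n * x 0 + y 2 ^ om n * x 1 + (y 0 * y 1 + y 2 * y 3) ^ 2 ^ n * x 3
      = 0 := by
    rw [← pow_eq_zero_iff (om_ne_zero (n := n)), add_pow_om, add_pow_om, mul_pow, mul_pow,
      mul_pow, sig_h, sig_sig, sig_sig]
    linear_combination y 2 * hG1 + y 1 * hG4
      - (x 0 * x 1 + x 2 * x 3) ^ 2 ^ n * (y 1 * y 2) * h2
  have k4 : y 3 ^ om n * x 0 + y 0 ^ om n * x 1 + (y 0 * y 1 + y 2 * y 3) ^ 2 ^ n * x 2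
      = 0 := by
    rw [← pow_eq_zero_iff (om_ne_zero (n := n)), add_pow_om, add_pow_om, mul_pow, mul_pow,
      mul_pow, sig_h, sig_sig, sig_sig]
    linear_combination y 3 * hG2 + y 0 * hG3
      - (x 0 * x 1 + x 2 * x 3) ^ 2 ^ n * (y 0 * y 3) * h2
  exact ⟨by linear_combination k1, by linear_combination k2,
    by linear_combination k3, by linear_combination k4⟩

end PolarAux
namespace PolarAux

variable {n : ℕ}

lemma two_le_finrank {p : Submodule (F n) (Fin 4 → F n)} {u v : Fin 4 → F n} {i j : Fin 4}
    (hu : u ∈ p) (hv : v ∈ p) (hui : u i = 0) (huj : u j ≠ 0) (hvi : v i ≠ 0) (hvj : v j = 0) :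
    2 ≤ Module.finrank (F n) p := by
  have hli : LinearIndependent (F n) ![u, v] := by
    rw [LinearIndependent.pair_iff]
    intro s t hst
    have e1 : s * u i + t * v i = 0 := by simpa using congrFun hst i
    have e2 : s * u j + t * v j = 0 := by simpa using congrFun hst j
    rw [hui, mul_zero, zero_add] at e1
    rw [hvj, mul_zero, add_zero] at e2
    exact ⟨(mul_eq_zero.mp e2).resolve_right huj, (mul_eq_zero.mp e1).resolve_right hvi⟩
  have hsp : Submodule.span (F n) (Set.range ![u, v]) ≤ p := by
    rw [Submodule.span_le]
    rintro w ⟨k, rfl⟩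
    fin_cases k <;> simpa
  have hfr := finrank_span_eq_card hli
  calc (2 : ℕ) = Module.finrank (F n) (Submodule.span (F n) (Set.range ![u, v])) := by
        rw [hfr]; simp
    _ ≤ Module.finrank (F n) p := Submodule.finrank_mono hsp

lemma rank_two (x : Fin 4 → F n) (hx : x ≠ 0) :
    2 ≤ Module.finrank (F n) (polarSpan n x) := by
  have hmem : ∀ v ∈ polarGens n x, v ∈ polarSpan n x := fun v hv => Submodule.subset_span hv
  have h0 : ![0, (x 0 * x 1 + x 2 * x 3) ^ 2 ^ n, x 0 ^ om n, x 2 ^ om n] ∈ polarSpan n x :=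
    hmem _ (by simp [polarGens])
  have h1 : ![(x 0 * x 1 + x 2 * x 3) ^ 2 ^ n, 0, x 3 ^ om n, x 1 ^ om n] ∈ polarSpan n x :=
    hmem _ (by simp [polarGens])
  have h2 : ![x 0 ^ om n, x 3 ^ om n, 0, (x 0 * x 1 + x 2 * x 3) ^ 2 ^ n] ∈ polarSpan n x :=
    hmem _ (by simp [polarGens])
  have h3 : ![x 2 ^ om n, x 1 ^ om n, (x 0 * x 1 + x 2 * x 3) ^ 2 ^ n, 0] ∈ polarSpan n x :=
    hmem _ (by simp [polarGens])
  by_cases c0 : x 0 = 0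
  · by_cases c1 : x 1 = 0
    · by_cases c2 : x 2 = 0
      · by_cases c3 : x 3 = 0
        · exact absurd (funext fun i => by fin_cases i <;> assumption) hx
        · exact two_le_finrank h1 h2 (i := 1) (j := 2) (by simp)
            (by simpa using pow_ne_zero (om n) c3)
            (by simpa using pow_ne_zero (om n) c3) (by simp)
      · exact two_le_finrank h0 h3 (i := 0) (j := 3) (by simp)
          (by simpa using pow_ne_zero (om n) c2)
          (by simpa using pow_ne_zero (om n) c2) (by simp)
    · exact two_le_finrank h1 h3 (i := 1) (j := 3) (by simp)
        (by simpa using pow_ne_zero (om n) c1)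
        (by simpa using pow_ne_zero (om n) c1) (by simp)
  · exact two_le_finrank h0 h2 (i := 0) (j := 2) (by simp)
      (by simpa using pow_ne_zero (om n) c0)
      (by simpa using pow_ne_zero (om n) c0) (by simp)

lemma xt_ne_zero {x : Fin 4 → F n} (hx : x ≠ 0) :
    (![x 1, x 0, x 3, x 2] : Fin 4 → F n) ≠ 0 := by
  intro h
  apply hx
  funext i
  have e0 := congrFun h 0
  have e1 := congrFun h 1
  have e2 := congrFun h 2
  have e3 := congrFun h 3
  simp at e0 e1 e2 e3
  fin_cases i <;> assumption

lemma span_eq_ker (x : Fin 4 → F n) (hx : x ≠ 0) :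
    polarSpan n x = LinearMap.ker (Nmat n x).mulVecLin := by
  have hle := span_le_ker (n := n) x
  refine Submodule.eq_of_le_of_finrank_le hle ?_
  have hr : 2 ≤ Module.finrank (F n) (LinearMap.range (Nmat n x).mulVecLin) := by
    rw [range_Nmat]
    exact rank_two _ (xt_ne_zero hx)
  have hs := rank_two x hx
  have hrn := LinearMap.finrank_range_add_finrank_ker (Nmat n x).mulVecLin
  have hdom : Module.finrank (F n) (Fin 4 → F n) = 4 := by
    rw [Module.finrank_pi]; simp
  rw [hdom] at hrn
  omega

end PolarAux
theorem polar_symmetric (n : ℕ) (hn : 1 ≤ n) (x y : Fin 4 → F n)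
    (hx : x ≠ 0) (hy : y ≠ 0) :
    y ∈ polarSpan n x ↔ x ∈ polarSpan n y := by
  have key : ∀ z w : Fin 4 → F n, z ≠ 0 → w ≠ 0 → w ∈ polarSpan n z → z ∈ polarSpan n w := by
    intro z w hz hw hm
    rw [PolarAux.span_eq_ker z hz] at hm
    rw [PolarAux.span_eq_ker w hw]
    rw [LinearMap.mem_ker, Matrix.mulVecLin_apply] at hm ⊢
    exact PolarAux.ker_swap hm
  exact ⟨key x y hx hy, key y x hy hx⟩
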